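/- The icosian ring 𝕀 is mapped onto itself by the twist map η: η(𝕀) = 𝕀. -/

import Mathlib

open Polynomial Quaternion

noncomputable section

set_option maxRecDepth 8000
set_option synthInstance.maxHeartbeats 1000000
set_option maxHeartbeats 1000000

def f5 : ℚ[X] := X ^ 2 - C 5

instance f5_irred : Fact (Irreducible f5) := ⟨by
  unfold f5
  apply X_pow_sub_C_irreducible_of_prime Nat.prime_two
  intro b hb
  have h5 : Irrational (Real.sqrt 5) := (Nat.prime_five).irrational_sqrt
  have hb' : ((b : ℝ)) ^ 2 = 5 := by exact_mod_cast congrArg (fun q : ℚ => (q : ℝ)) hb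
  have heq : Real.sqrt 5 = |(b : ℝ)| := by
    rw [← hb', Real.sqrt_sq_eq_abs]
  rw [heq] at h5
  exact h5 ⟨|b|, by push_cast; ring⟩⟩

abbrev K : Type := AdjoinRoot f5

instance : Field K := inferInstance
instance : SMul K (Quaternion K) := inferInstance
instance : Algebra K (Quaternion K) := inferInstance

def sqrt5 : K := AdjoinRoot.root f5

lemma sqrt5_sq : sqrt5 ^ 2 = 5 := by
  have key : ∀ p : ℚ[X], p = X ^ 2 - C 5 →
      eval₂ (AdjoinRoot.of f5) (AdjoinRoot.root f5) p = AdjoinRoot.root f5 ^ 2 - 5 := by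
    rintro p rfl
    simp [eval₂_sub, eval₂_pow, eval₂_X, eval₂_C]
  have h := AdjoinRoot.eval₂_root f5
  rw [key f5 rfl, sub_eq_zero] at h
  simpa [sqrt5] using h

def conjK : K →+* K :=
  AdjoinRoot.lift (algebraMap ℚ K) (-sqrt5) (by
    simp only [f5, eval₂_sub, eval₂_pow, eval₂_X, eval₂_C, sub_eq_zero]
    have h : (-sqrt5) ^ 2 = sqrt5 ^ 2 := by ring
    rw [h, sqrt5_sq]
    simp)

def τ : K := (1 + sqrt5) / 2

abbrev ℍK := Quaternion K

def twist (x : ℍK) : ℍK := ⟨conjK x.re, conjK x.imI, conjK x.imK, conjK x.imJ⟩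

def icoB : Fin 4 → ℍK :=
  ![1, ⟨0,1,0,0⟩, ⟨1/2,1/2,1/2,1/2⟩, ⟨(1-τ)/2, τ/2, 0, 1/2⟩]

def Ico : AddSubgroup ℍK :=
  AddSubgroup.closure (Set.range icoB ∪ Set.range fun i => τ • icoB i)

def lB : Fin 4 → ℍK :=
  ![1, ⟨-(1/2),1/2,1/2,1/2⟩, ⟨0,-1,0,0⟩, ⟨0,1/2,(τ-1)/2,-(τ/2)⟩]

def LatA4 : AddSubgroup ℍK := AddSubgroup.closure (Set.range lB)

def LatATau : AddSubgroup ℍK :=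
  AddSubgroup.closure (Set.range lB ∪ Set.range fun i => τ • lB i)



lemma conj_aeval : Polynomial.aeval (-sqrt5) f5 = 0 := by
  simp only [f5, map_sub, map_pow, aeval_X, aeval_C, sub_eq_zero]
  have h : (-sqrt5) ^ 2 = sqrt5 ^ 2 := by ring
  rw [h, sqrt5_sq]; simp

def conjA : K →ₐ[ℚ] K := AdjoinRoot.liftAlgHom f5 (Algebra.ofId ℚ K) (-sqrt5) conj_aeval

lemma conjK_eq (x : K) : conjK x = conjA x := rfl

lemma conjA_root : conjA (AdjoinRoot.root f5) = -sqrt5 := by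
  unfold conjA
  exact AdjoinRoot.liftAlgHom_root f5 (Algebra.ofId ℚ K) (-sqrt5) conj_aeval

lemma conj_sqrt5 : conjK sqrt5 = -sqrt5 := conjA_root

lemma conj_conj (x : K) : conjK (conjK x) = x := by
  have h : conjA.comp conjA = AlgHom.id ℚ K := by
    apply AdjoinRoot.algHom_ext
    show conjA (conjA (AdjoinRoot.root f5)) = AdjoinRoot.root f5
    rw [conjA_root, map_neg, show conjA sqrt5 = -sqrt5 from conjA_root, neg_neg]
    rfl
  simp only [conjK_eq]
  simpa using DFunLike.congr_fun h x

lemma conj_tau : conjK τ = 1 - τ := by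
  simp only [τ, map_div₀, map_add, map_one, conj_sqrt5]
  have h2 : (2 : K) ≠ 0 := two_ne_zero
  rw [map_ofNat]
  field_simp
  ring

lemma twist_add (a b : ℍK) : twist (a + b) = twist a + twist b := by
  apply Quaternion.ext <;> simp [twist, map_add] <;> rfl

lemma twist_neg (a : ℍK) : twist (-a) = -(twist a) := by
  apply Quaternion.ext <;> simp [twist] <;> rfl

lemma twist_twist (a : ℍK) : twist (twist a) = a := by
  apply Quaternion.ext <;> simp [twist, conj_conj]

lemma twist_smul (c : K) (a : ℍK) : twist (c • a) = conjK c • twist a := by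
  apply Quaternion.ext <;> simp [twist, map_mul, Quaternion.re_smul, smul_eq_mul] <;> rfl

lemma tau_sq : τ * τ = τ + 1 := by
  have h5 : sqrt5 * sqrt5 = 5 := by have := sqrt5_sq; rwa [pow_two] at this
  simp only [τ]
  field_simp
  linear_combination (1:K) * sqrt5_sq

lemma tau_smul_mem {x : ℍK} (hx : x ∈ Ico) : τ • x ∈ Ico := by
  induction hx using AddSubgroup.closure_induction with
  | mem y hy =>
    rcases hy with ⟨i, rfl⟩ | ⟨i, rfl⟩
    · exact AddSubgroup.subset_closure (Or.inr ⟨i, rfl⟩)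
    · have : τ • τ • icoB i = τ • icoB i + icoB i := by
        rw [smul_smul, tau_sq, add_smul, one_smul]
      rw [this]
      exact AddSubgroup.add_mem _ (AddSubgroup.subset_closure (Or.inr ⟨i, rfl⟩))
        (AddSubgroup.subset_closure (Or.inl ⟨i, rfl⟩))
  | zero => simpa using AddSubgroup.zero_mem Ico
  | add a b _ _ ha hb => rw [smul_add]; exact AddSubgroup.add_mem _ ha hb
  | neg a _ ha => rw [smul_neg]; exact AddSubgroup.neg_mem _ ha

lemma icoB_mem (i : Fin 4) : icoB i ∈ Ico :=
  AddSubgroup.subset_closure (Or.inl ⟨i, rfl⟩)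

lemma twist_icoB_mem (i : Fin 4) : twist (icoB i) ∈ Ico := by
  fin_cases i
  · show twist (icoB 0) ∈ Ico
    have : twist (icoB 0) = icoB 0 := by
      apply Quaternion.ext <;> simp [twist, icoB, map_one]
    rw [this]; exact icoB_mem 0
  · show twist (icoB 1) ∈ Ico
    have : twist (icoB 1) = icoB 1 := by
      apply Quaternion.ext <;> simp [twist, icoB, map_one]
    rw [this]; exact icoB_mem 1
  · show twist (icoB 2) ∈ Ico
    have : twist (icoB 2) = icoB 2 := by
      apply Quaternion.ext <;>
        simp [twist, icoB, map_div₀, map_one, map_ofNat]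
    rw [this]; exact icoB_mem 2
  · show twist (icoB 3) ∈ Ico
    have : twist (icoB 3) = icoB 2 - icoB 3 := by
      apply Quaternion.ext <;>
        simp [twist, icoB, map_div₀, map_one, map_ofNat, map_sub, conj_tau,
          Quaternion.re_sub] <;> change _ = _ - _ <;> ring
    rw [this]
    exact AddSubgroup.sub_mem _ (icoB_mem 2) (icoB_mem 3)

lemma twist_mem {x : ℍK} (hx : x ∈ Ico) : twist x ∈ Ico := by
  induction hx using AddSubgroup.closure_induction with
  | mem y hy =>
    rcases hy with ⟨i, rfl⟩ | ⟨i, rfl⟩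
    · exact twist_icoB_mem i
    · rw [twist_smul, conj_tau, sub_smul, one_smul]
      exact AddSubgroup.sub_mem _ (twist_icoB_mem i) (tau_smul_mem (twist_icoB_mem i))
  | zero =>
    have : twist (0 : ℍK) = 0 := by apply Quaternion.ext <;> simp [twist]
    rw [this]; exact AddSubgroup.zero_mem _
  | add a b _ _ ha hb => rw [twist_add]; exact AddSubgroup.add_mem _ ha hb
  | neg a _ ha => rw [twist_neg]; exact AddSubgroup.neg_mem _ ha

/-- the twist map maps the icosian ring onto itself. -/
theorem twist_image_icosians : twist '' (Ico : Set ℍK) = (Ico : Set ℍK) := by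
  apply Set.eq_of_subset_of_subset
  · rintro _ ⟨x, hx, rfl⟩
    exact twist_mem hx
  · intro x hx
    exact ⟨twist x, twist_mem hx, twist_twist x⟩
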